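/- If a semigroup X is absolutely TzS-closed, then every prime coideal of X is an absolutely TzS-closed semigroup; if X is projectively TzS-closed, then every prime coideal of X is projectively TzS-closed. -/

import Mathlib

universe u

open Set TopologicalSpace

/-- A topological space is zero-dimensional: it has a base of clopen sets. -/
def HasClopenBasis (Y : Type*) [TopologicalSpace Y] : Prop :=
  ∃ B : Set (Set Y), (∀ s ∈ B, IsClopen s) ∧ IsTopologicalBasis B

section TopClasses

variable (X : Type u) [Semigroup X]

/-- `X` is absolutely `T₁S`-closed: the image of every homomorphism to a `T₁`
topological semigroup is closed. -/
def AbsolutelyT1SClosed : Prop :=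
  ∀ (Y : Type u) [Semigroup Y] [TopologicalSpace Y] [ContinuousMul Y] [T1Space Y]
    (h : X →ₙ* Y), IsClosed (Set.range h)

/-- `X` is absolutely `T₂S`-closed. -/
def AbsolutelyT2SClosed : Prop :=
  ∀ (Y : Type u) [Semigroup Y] [TopologicalSpace Y] [ContinuousMul Y] [T2Space Y]
    (h : X →ₙ* Y), IsClosed (Set.range h)

/-- `X` is absolutely `TzS`-closed. -/
def AbsolutelyTzSClosed : Prop :=
  ∀ (Y : Type u) [Semigroup Y] [TopologicalSpace Y] [ContinuousMul Y] [T1Space Y],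
    HasClopenBasis Y → ∀ (h : X →ₙ* Y), IsClosed (Set.range h)

/-- `X` is `T₁S`-closed: the image of every injective homomorphism to a `T₁`
topological semigroup with discrete image is closed. -/
def T1SClosed : Prop :=
  ∀ (Y : Type u) [Semigroup Y] [TopologicalSpace Y] [ContinuousMul Y] [T1Space Y]
    (h : X →ₙ* Y), Function.Injective h → DiscreteTopology (Set.range h) →
      IsClosed (Set.range h)

/-- `X` is `T₂S`-closed. -/
def T2SClosed : Prop :=
  ∀ (Y : Type u) [Semigroup Y] [TopologicalSpace Y] [ContinuousMul Y] [T2Space Y]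
    (h : X →ₙ* Y), Function.Injective h → DiscreteTopology (Set.range h) →
      IsClosed (Set.range h)

/-- `X` is `TzS`-closed. -/
def TzSClosed : Prop :=
  ∀ (Y : Type u) [Semigroup Y] [TopologicalSpace Y] [ContinuousMul Y] [T1Space Y],
    HasClopenBasis Y → ∀ (h : X →ₙ* Y), Function.Injective h →
      DiscreteTopology (Set.range h) → IsClosed (Set.range h)

/-- `X` is injectively `T₂S`-closed. -/
def InjectivelyT2SClosed : Prop :=
  ∀ (Y : Type u) [Semigroup Y] [TopologicalSpace Y] [ContinuousMul Y] [T2Space Y]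
    (h : X →ₙ* Y), Function.Injective h → IsClosed (Set.range h)

/-- `X` is projectively `T₁S`-closed: all congruence quotients are `T₁S`-closed. -/
def ProjectivelyT1SClosed : Prop := ∀ c : Con X, T1SClosed c.Quotient

/-- `X` is projectively `TzS`-closed. -/
def ProjectivelyTzSClosed : Prop := ∀ c : Con X, TzSClosed c.Quotient

/-- `X` is projectively `T₁S`-discrete: every homomorphism into a `T₁`
topological semigroup has discrete image. -/
def ProjectivelyT1SDiscrete : Prop :=
  ∀ (Y : Type u) [Semigroup Y] [TopologicalSpace Y] [ContinuousMul Y] [T1Space Y]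
    (h : X →ₙ* Y), DiscreteTopology (Set.range h)

/-- `X` is projectively `TzS`-discrete. -/
def ProjectivelyTzSDiscrete : Prop :=
  ∀ (Y : Type u) [Semigroup Y] [TopologicalSpace Y] [ContinuousMul Y] [T1Space Y],
    HasClopenBasis Y → ∀ (h : X →ₙ* Y), DiscreteTopology (Set.range h)

end TopClasses

/-- `spow x n` is the power `x^(n+1)` in a semigroup; thus as `n` ranges over `ℕ`,
`spow x n` ranges over all powers `x^m`, `m ≥ 1`. -/
def spow {X : Type*} [Semigroup X] (x : X) : ℕ → X
  | 0 => x
  | n + 1 => spow x n * x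

section AlgDefs

variable (X : Type*) [Semigroup X]

/-- the set `E(X)` of idempotents. -/
def idemSet : Set X := {x | x * x = x}

/-- `H_e`, the maximal subgroup containing the idempotent `e`. -/
def maxSubgroup (e : X) : Set X :=
  {x | x * e = x ∧ e * x = x ∧ ∃ y, y * e = y ∧ e * y = y ∧ x * y = e ∧ y * x = e}

/-- The Clifford part `H(X) = ⋃_{e ∈ E(X)} H_e`. -/
def cliffordPart : Set X := ⋃ e ∈ idemSet X, maxSubgroup X e

/-- `H_e/e := {x : xe = ex ∈ H_e}`. -/
def HeCoideal (e : X) : Set X := {x | x * e = e * x ∧ x * e ∈ maxSubgroup X e}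

/-- `I` is an ideal of the semigroup `X`. -/
def IsIdealSet (I : Set X) : Prop := ∀ x ∈ I, ∀ y : X, x * y ∈ I ∧ y * x ∈ I

/-- The set `VE(X)` of viable idempotents: `e` is idempotent and `X ∖ (H_e/e)` is an ideal. -/
def viableIdems : Set X := {e | e ∈ idemSet X ∧ IsIdealSet X (Set.univ \ HeCoideal X e)}

/-- The center `Z(X)`. -/
def centerSet : Set X := {z | ∀ x, z * x = x * z}

/-- `√A = {x : xⁿ ∈ A for some n ≥ 1}`. -/
def sqrtSet (A : Set X) : Set X := {x | ∃ n : ℕ, spow x n ∈ A}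

/-- A subset `B ⊆ X` is bounded: there is `n ≥ 1` with `xⁿ` idempotent for all `x ∈ B`. -/
def BoundedSet (B : Set X) : Prop := ∃ n : ℕ, ∀ x ∈ B, spow x n ∈ idemSet X

/-- The semigroup `X` is bounded. -/
def BoundedSemigroup : Prop := ∃ n : ℕ, ∀ x : X, spow x n ∈ idemSet X

/-- `X` is chain-finite. -/
def ChainFinite : Prop :=
  ∀ I : Set X, I.Infinite → ∃ x ∈ I, ∃ y ∈ I, x * y ≠ x ∧ x * y ≠ y

/-- `G ⊆ X` is a subgroup of the semigroup `X`. -/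
def IsSubgroupSet (G : Set X) : Prop :=
  (∀ x ∈ G, ∀ y ∈ G, x * y ∈ G) ∧
    ∃ e ∈ G, (∀ x ∈ G, x * e = x ∧ e * x = x) ∧ ∀ x ∈ G, ∃ y ∈ G, x * y = e ∧ y * x = e

/-- `X` is group-finite: all its subgroups are finite. -/
def GroupFinite : Prop := ∀ G : Set X, IsSubgroupSet X G → G.Finite

/-- `X` is Clifford+finite: `X ∖ H(X)` is finite. -/
def CliffordPlusFinite : Prop := (Set.univ \ cliffordPart X).Finite

/-- `X` is `E`-commutative: idempotents commute. -/
def ECommutative : Prop := ∀ x ∈ idemSet X, ∀ y ∈ idemSet X, x * y = y * x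

end AlgDefs

/-- The Rees congruence associated with an ideal `I` of `X`. -/
def ReesCon {X : Type*} [Semigroup X] (I : Set X) (hI : IsIdealSet X I) : Con X where
  r x y := x = y ∨ (x ∈ I ∧ y ∈ I)
  iseqv :=
    { refl := fun _ => Or.inl rfl
      symm := by rintro x y (rfl | ⟨h1, h2⟩); exacts [Or.inl rfl, Or.inr ⟨h2, h1⟩]
      trans := by
        rintro x y z (rfl | ⟨h1, h2⟩) (rfl | ⟨h3, h4⟩)
        exacts [Or.inl rfl, Or.inr ⟨h3, h4⟩, Or.inr ⟨h1, h2⟩, Or.inr ⟨h1, h4⟩] }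
  mul' := by
    rintro a b c d (rfl | ⟨h1, h2⟩) (rfl | ⟨h3, h4⟩)
    · exact Or.inl rfl
    · exact Or.inr ⟨(hI c h3 a).2, (hI d h4 a).2⟩
    · exact Or.inr ⟨(hI a h1 c).1, (hI b h2 c).1⟩
    · exact Or.inr ⟨(hI a h1 c).1, (hI b h2 d).1⟩

/-- `X` is ideally `T₂S`-closed: all its Rees quotients are `T₂S`-closed. -/
def IdeallyT2SClosed (X : Type u) [Semigroup X] : Prop :=
  ∀ (I : Set X) (hI : IsIdealSet X I), T2SClosed (ReesCon I hI).Quotient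

/-- `X` is ideally `TzS`-closed. -/
def IdeallyTzSClosed (X : Type u) [Semigroup X] : Prop :=
  ∀ (I : Set X) (hI : IsIdealSet X I), TzSClosed (ReesCon I hI).Quotient

/-- A congruence is a semilattice congruence if its quotient is a commutative
semigroup of idempotents. -/
def IsSemilatticeCon {X : Type*} [Semigroup X] (c : Con X) : Prop :=
  (∀ a b : c.Quotient, a * b = b * a) ∧ ∀ a : c.Quotient, a * a = a

/-- The smallest semilattice congruence `⇕` on `X`, the intersection of all
semilattice congruences. -/
def slCon (X : Type*) [Semigroup X] : Con X := sInf {c | IsSemilatticeCon c}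

theorem centerSet_mul_mem {X : Type*} [Semigroup X] {a b : X}
    (ha : a ∈ centerSet X) (hb : b ∈ centerSet X) : a * b ∈ centerSet X := fun t => by
  rw [mul_assoc, hb t, ← mul_assoc, ha t, mul_assoc]

/-- The ideal center `IZ(X) = {z ∈ Z(X) : zX ⊆ Z(X)}`, as a subsemigroup of `X`. -/
def idealCenter (X : Type*) [Semigroup X] : Subsemigroup X where
  carrier := {z | z ∈ centerSet X ∧ ∀ x : X, z * x ∈ centerSet X}
  mul_mem' := by
    rintro a b ⟨ha, ha'⟩ ⟨hb, hb'⟩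
    refine ⟨centerSet_mul_mem ha hb, fun x => ?_⟩
    have h : a * b * x = a * (b * x) := mul_assoc a b x
    rw [h]
    exact centerSet_mul_mem ha (hb' x)

/-- Evaluation of the semigroup polynomial with coefficients `a, l = [a₁, …, aₙ]`:
`x ↦ a * x * a₁ * x * ⋯ * x * aₙ` (computed in `X¹ = WithOne X`). -/
def polyEval {X : Type*} [Semigroup X] (a : WithOne X) (l : List (WithOne X)) (x : X) :
    WithOne X :=
  l.foldl (fun acc b => acc * (x : WithOne X) * b) a

/-- `f : X → X¹` is a semigroup polynomial of degree `d ≥ 1`. -/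
def IsSemigroupPolynomial {X : Type*} [Semigroup X] (f : X → WithOne X) (d : ℕ) : Prop :=
  1 ≤ d ∧ ∃ (a : WithOne X) (l : List (WithOne X)), l.length = d ∧ ∀ x, f x = polyEval a l x

/-- `X` is polybounded. -/
def Polybounded (X : Type*) [Semigroup X] : Prop :=
  ∃ (k : ℕ) (f : Fin k → X → WithOne X) (d : Fin k → ℕ) (b : Fin k → X),
    (∀ i, IsSemigroupPolynomial (f i) (d i)) ∧ ∀ x : X, ∃ i, f i x = (b i : WithOne X)

/-- `X` is polyfinite. -/
def Polyfinite (X : Type*) [Semigroup X] : Prop :=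
  ∃ (d : ℕ) (F : Set X), F.Finite ∧ ∀ x y : X,
    ∃ (f : X → WithOne X) (m : ℕ), m ≤ d ∧ IsSemigroupPolynomial f m ∧
      (∃ u ∈ F, f x = (u : WithOne X)) ∧ ∃ v ∈ F, f y = (v : WithOne X)

/-- `X` is `B`-centrobounded over `B ⊆ E(X)`: there is `n ≥ 1` such that for every
`e ∈ B` and all `x, y ∈ ⋂_{a ∈ B} H_a/a`, if `w` is the inverse of `y*e` in the group
`H_e` and `(x*e)*w ∈ H_e ∩ Z(X)`, then `((x*e)*w)ⁿ` is an idempotent. -/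
def Centrobounded {X : Type*} [Semigroup X] (B : Set X) : Prop :=
  ∃ n : ℕ, ∀ e ∈ B, ∀ x ∈ ⋂ a ∈ B, HeCoideal X a, ∀ y ∈ ⋂ a ∈ B, HeCoideal X a,
    ∀ w ∈ maxSubgroup X e, (y * e) * w = e → w * (y * e) = e →
      (x * e) * w ∈ maxSubgroup X e → (x * e) * w ∈ centerSet X →
        spow ((x * e) * w) n ∈ idemSet X

/-- `B` is an antichain in the natural partial order `e ≤ f ⇔ ef = fe = e` on idempotents. -/
def IsIdemAntichain {X : Type*} [Semigroup X] (B : Set X) : Prop :=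
  ∀ e ∈ B, ∀ f ∈ B, e ≠ f → ¬(e * f = e ∧ f * e = e) ∧ ¬(e * f = f ∧ f * e = f)

section WZ2


variable {Y : Type u} [Semigroup Y] [TopologicalSpace Y]

noncomputable instance wzTop : TopologicalSpace (WithZero Y) :=
  TopologicalSpace.coinduced (fun y : Y => (y : WithZero Y)) inferInstance

lemma wz_isOpen_iff {S : Set (WithZero Y)} :
    IsOpen S ↔ IsOpen ((fun y : Y => (y : WithZero Y)) ⁻¹' S) := Iff.rfl

lemma wz_continuous_coe : Continuous (fun y : Y => (y : WithZero Y)) :=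
  continuous_coinduced_rng

lemma wz_coe_injective : Function.Injective (fun y : Y => (y : WithZero Y)) :=
  fun _ _ h => WithZero.coe_inj.mp h

lemma wz_preimage_image (U : Set Y) :
    (fun y : Y => (y : WithZero Y)) ⁻¹' ((fun y : Y => (y : WithZero Y)) '' U) = U :=
  Set.preimage_image_eq U wz_coe_injective

lemma wz_isOpen_image {U : Set Y} (hU : IsOpen U) :
    IsOpen ((fun y : Y => (y : WithZero Y)) '' U) := by
  rw [wz_isOpen_iff, wz_preimage_image]; exact hU

lemma wz_isOpen_zero : IsOpen ({0} : Set (WithZero Y)) := by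
  rw [wz_isOpen_iff]
  convert isOpen_empty
  ext y
  simp [WithZero.coe_ne_zero]

lemma wz_isClosed_zero : IsClosed ({0} : Set (WithZero Y)) := by
  rw [← isOpen_compl_iff, wz_isOpen_iff]
  convert isOpen_univ
  ext y
  simp [WithZero.coe_ne_zero]

lemma wz_t1 [T1Space Y] : T1Space (WithZero Y) := by
  constructor
  intro x
  induction x using WithZero.recZeroCoe with
  | zero => exact wz_isClosed_zero
  | coe a =>
    rw [← isOpen_compl_iff, wz_isOpen_iff]
    have : (fun y : Y => (y : WithZero Y)) ⁻¹' ({(a : WithZero Y)}ᶜ) = {a}ᶜ := by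
      ext y; simp [WithZero.coe_inj]
    rw [this]
    exact isOpen_compl_singleton

lemma wz_continuousMul [ContinuousMul Y] : ContinuousMul (WithZero Y) := by
  constructor
  rw [continuous_def]
  intro S hS
  rw [isOpen_prod_iff]
  intro x y hxy
  induction x using WithZero.recZeroCoe with
  | zero =>
    refine ⟨{0}, Set.univ, wz_isOpen_zero, isOpen_univ, rfl, trivial, ?_⟩
    rintro ⟨p, q⟩ ⟨hp, -⟩
    simp only [Set.mem_singleton_iff] at hp
    have : p * q = 0 := by rw [hp]; exact zero_mul q
    simpa [Set.mem_preimage, this] using (by simpa [zero_mul] using hxy : (0:WithZero Y) ∈ S)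
  | coe a =>
    induction y using WithZero.recZeroCoe with
    | zero =>
      refine ⟨Set.univ, {0}, isOpen_univ, wz_isOpen_zero, trivial, rfl, ?_⟩
      rintro ⟨p, q⟩ ⟨-, hq⟩
      simp only [Set.mem_singleton_iff] at hq
      have : p * q = 0 := by rw [hq]; exact mul_zero p
      simpa [Set.mem_preimage, this] using (by simpa [mul_zero] using hxy : (0:WithZero Y) ∈ S)
    | coe b =>
      have hab : a * b ∈ (fun y : Y => (y : WithZero Y)) ⁻¹' S := by
        simpa [WithZero.coe_mul] using hxy
      have hU : IsOpen ((fun y : Y => (y : WithZero Y)) ⁻¹' S) := hS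
      have hcm : ContinuousAt (fun p : Y × Y => p.1 * p.2) (a, b) :=
        (continuous_mul).continuousAt
      have hmem : (fun p : Y × Y => p.1 * p.2) ⁻¹' ((fun y : Y => (y : WithZero Y)) ⁻¹' S)
          ∈ nhds (a, b) := hcm (hU.mem_nhds hab)
      obtain ⟨V, W, hV, haV, hW, hbW, hVW⟩ := mem_nhds_prod_iff'.mp hmem
      refine ⟨(fun y : Y => (y : WithZero Y)) '' V, (fun y : Y => (y : WithZero Y)) '' W,
        wz_isOpen_image hV, wz_isOpen_image hW, ⟨a, haV, rfl⟩, ⟨b, hbW, rfl⟩, ?_⟩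
      rintro ⟨p, q⟩ ⟨⟨v, hv, rfl⟩, ⟨w, hw, rfl⟩⟩
      have : (v : WithZero Y) * w = ((v * w : Y) : WithZero Y) := (WithZero.coe_mul v w).symm
      simp only [Set.mem_preimage, this]
      exact hVW (Set.mk_mem_prod hv hw)

lemma wz_hasClopenBasis (hB : HasClopenBasis Y) : HasClopenBasis (WithZero Y) := by
  obtain ⟨B, hclopen, hbasis⟩ := hB
  refine ⟨insert {0} ((fun s : Set Y => (fun y : Y => (y : WithZero Y)) '' s) '' B), ?_, ?_⟩
  · rintro s (rfl | ⟨t, ht, rfl⟩)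
    · exact ⟨wz_isClosed_zero, wz_isOpen_zero⟩
    · refine ⟨?_, wz_isOpen_image (hclopen t ht).2⟩
      rw [← isOpen_compl_iff, wz_isOpen_iff]
      have : (fun y : Y => (y : WithZero Y)) ⁻¹' (((fun y : Y => (y : WithZero Y)) '' t)ᶜ) = tᶜ := by
        rw [Set.preimage_compl, wz_preimage_image]
      rw [this]
      exact (hclopen t ht).1.isOpen_compl
  · refine TopologicalSpace.isTopologicalBasis_of_isOpen_of_nhds ?_ ?_
    · rintro s (rfl | ⟨t, ht, rfl⟩)
      · exact wz_isOpen_zero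
      · exact wz_isOpen_image (hclopen t ht).2
    · intro a u hau hu
      induction a using WithZero.recZeroCoe with
      | zero => exact ⟨{0}, Set.mem_insert _ _, rfl, by simpa using hau⟩
      | coe b =>
        have hb : b ∈ (fun y : Y => (y : WithZero Y)) ⁻¹' u := hau
        obtain ⟨v, hvB, hbv, hvu⟩ := hbasis.exists_subset_of_mem_open hb hu
        exact ⟨(fun y : Y => (y : WithZero Y)) '' v,
          Set.mem_insert_of_mem _ ⟨v, hvB, rfl⟩, ⟨b, hbv, rfl⟩,
          by rintro z ⟨w, hw, rfl⟩; exact hvu hw⟩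


end WZ2

section Main

variable {X : Type u} [Semigroup X]

open scoped Classical in
/-- Extension of a hom on a prime coideal `C` to all of `X`, valued in `WithZero`. -/
noncomputable def extHom (C : Subsemigroup X)
    (hC : IsIdealSet X (Set.univ \ (C : Set X))) {Z : Type*} [Semigroup Z]
    (f : ↥C →ₙ* Z) : X →ₙ* WithZero Z where
  toFun x := if h : x ∈ C then ((f ⟨x, h⟩ : Z) : WithZero Z) else 0
  map_mul' x y := by
    by_cases hx : x ∈ C <;> by_cases hy : y ∈ C
    · have hxy : x * y ∈ C := C.mul_mem hx hy
      have : f ⟨x * y, hxy⟩ = f ⟨x, hx⟩ * f ⟨y, hy⟩ := f.map_mul ⟨x, hx⟩ ⟨y, hy⟩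
      simp [hx, hy, hxy, this, WithZero.coe_mul]
    · have hxy : x * y ∉ C := fun h => ((hC y ⟨trivial, hy⟩ x).2).2 h
      simp [hx, hy, hxy]
    · have hxy : x * y ∉ C := fun h => ((hC x ⟨trivial, hx⟩ y).1).2 h
      simp [hx, hy, hxy]
    · have hxy : x * y ∉ C := fun h => ((hC x ⟨trivial, hx⟩ y).1).2 h
      simp [hx, hy, hxy]

lemma extHom_mem (C : Subsemigroup X) (hC : IsIdealSet X (Set.univ \ (C : Set X)))
    {Z : Type*} [Semigroup Z] (f : ↥C →ₙ* Z) {x : X} (hx : x ∈ C) :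
    extHom C hC f x = ((f ⟨x, hx⟩ : Z) : WithZero Z) := by
  simp [extHom, hx]

lemma extHom_not_mem (C : Subsemigroup X) (hC : IsIdealSet X (Set.univ \ (C : Set X)))
    {Z : Type*} [Semigroup Z] (f : ↥C →ₙ* Z) {x : X} (hx : x ∉ C) :
    extHom C hC f x = 0 := by
  simp [extHom, hx]

lemma range_eq_preimage_range_extHom (C : Subsemigroup X)
    (hC : IsIdealSet X (Set.univ \ (C : Set X))) {Z : Type*} [Semigroup Z]
    (f : ↥C →ₙ* Z) :
    Set.range f = (fun z : Z => (z : WithZero Z)) ⁻¹' Set.range (extHom C hC f) := by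
  ext z
  constructor
  · rintro ⟨c, rfl⟩
    exact ⟨(c : X), by rw [extHom_mem C hC f c.2]⟩
  · rintro ⟨x, hx⟩
    by_cases hxC : x ∈ C
    · rw [extHom_mem C hC f hxC] at hx
      exact ⟨⟨x, hxC⟩, WithZero.coe_inj.mp hx⟩
    · rw [extHom_not_mem C hC f hxC] at hx
      exact absurd hx.symm WithZero.coe_ne_zero

/-- Extension of a congruence on a prime coideal to the whole semigroup. -/
def extCon (C : Subsemigroup X) (hC : IsIdealSet X (Set.univ \ (C : Set X)))
    (c : Con ↥C) : Con X where
  r x y := (∃ hx : x ∈ C, ∃ hy : y ∈ C, c ⟨x, hx⟩ ⟨y, hy⟩) ∨ (x ∉ C ∧ y ∉ C)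
  iseqv :=
    { refl := fun x => by
        by_cases hx : x ∈ C
        · exact Or.inl ⟨hx, hx, c.refl _⟩
        · exact Or.inr ⟨hx, hx⟩
      symm := by
        rintro x y (⟨hx, hy, hc⟩ | ⟨hx, hy⟩)
        exacts [Or.inl ⟨hy, hx, c.symm hc⟩, Or.inr ⟨hy, hx⟩]
      trans := by
        rintro x y z (⟨hx, hy, hc⟩ | ⟨hx, hy⟩) (⟨hy', hz, hc'⟩ | ⟨hy', hz⟩)
        · exact Or.inl ⟨hx, hz, c.trans hc hc'⟩
        · exact absurd hy hy'
        · exact absurd hy' hy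
        · exact Or.inr ⟨hx, hz⟩ }
  mul' := by
    rintro w x y z (⟨hw, hx, hc⟩ | ⟨hw, hx⟩) (⟨hy, hz, hc'⟩ | ⟨hy, hz⟩)
    · exact Or.inl ⟨C.mul_mem hw hy, C.mul_mem hx hz, c.mul hc hc'⟩
    · exact Or.inr ⟨fun h => ((hC y ⟨trivial, hy⟩ w).2).2 h,
        fun h => ((hC z ⟨trivial, hz⟩ x).2).2 h⟩
    · exact Or.inr ⟨fun h => ((hC w ⟨trivial, hw⟩ y).1).2 h,
        fun h => ((hC x ⟨trivial, hx⟩ z).1).2 h⟩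
    · exact Or.inr ⟨fun h => ((hC w ⟨trivial, hw⟩ y).1).2 h,
        fun h => ((hC x ⟨trivial, hx⟩ z).1).2 h⟩

/-- A discreteness criterion for subtypes. -/
lemma discrete_of_isolated {A : Type*} [TopologicalSpace A] {s : Set A}
    (h : ∀ a ∈ s, ∃ U : Set A, IsOpen U ∧ U ∩ s = {a}) : DiscreteTopology ↥s := by
  rw [discreteTopology_iff_isOpen_singleton]
  rintro ⟨a, ha⟩
  obtain ⟨U, hU, hUs⟩ := h a ha
  rw [isOpen_induced_iff]
  refine ⟨U, hU, ?_⟩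
  ext ⟨b, hb⟩
  simp only [Set.mem_preimage, Set.mem_singleton_iff, Subtype.mk.injEq]
  constructor
  · intro hbU
    have : b ∈ U ∩ s := ⟨hbU, hb⟩
    rw [hUs] at this
    exact this
  · intro hba
    rw [hba]
    have : a ∈ U ∩ s := by rw [hUs]; rfl
    exact this.1

lemma isolated_of_discrete {A : Type*} [TopologicalSpace A] {s : Set A}
    [DiscreteTopology ↥s] {a : A} (ha : a ∈ s) :
    ∃ U : Set A, IsOpen U ∧ a ∈ U ∧ U ∩ s ⊆ {a} := by
  have h1 : IsOpen ({⟨a, ha⟩} : Set ↥s) := isOpen_discrete _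
  rw [isOpen_induced_iff] at h1
  obtain ⟨U, hU, hUs⟩ := h1
  refine ⟨U, hU, ?_, ?_⟩
  · have : (⟨a, ha⟩ : ↥s) ∈ (Subtype.val ⁻¹' U : Set ↥s) := by rw [hUs]; rfl
    exact this
  · rintro b ⟨hbU, hbs⟩
    have : (⟨b, hbs⟩ : ↥s) ∈ (Subtype.val ⁻¹' U : Set ↥s) := hbU
    rw [hUs] at this
    exact Set.mem_singleton_iff.mpr (congrArg Subtype.val this)

end Main

theorem statement15 (X : Type u) [Semigroup X] (C : Subsemigroup X)
    (hC : IsIdealSet X (Set.univ \ (C : Set X))) :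
    (AbsolutelyTzSClosed X → AbsolutelyTzSClosed ↥C) ∧
    (ProjectivelyTzSClosed X → ProjectivelyTzSClosed ↥C) := by
  constructor
  · intro hX
    intro Y _ _ _ _ hB f
    haveI : T1Space (WithZero Y) := wz_t1
    haveI : ContinuousMul (WithZero Y) := wz_continuousMul
    have hclosed : IsClosed (Set.range (extHom C hC f)) :=
      hX (WithZero Y) (wz_hasClopenBasis hB) (extHom C hC f)
    rw [range_eq_preimage_range_extHom C hC f]
    exact hclosed.preimage wz_continuous_coe
  · intro hX
    intro c
    intro Y _ _ _ _ hB f hinj hdisc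
    haveI : T1Space (WithZero Y) := wz_t1
    haveI : ContinuousMul (WithZero Y) := wz_continuousMul
    set c' : Con X := extCon C hC c with hc'
    -- g : ↥C →ₙ* Y
    set g : ↥C →ₙ* Y := f.comp ⟨fun a => (a : c.Quotient), fun a b => rfl⟩ with hg
    set G : X →ₙ* WithZero Y := extHom C hC g with hG
    -- F : c'.Quotient →ₙ* WithZero Y
    have hresp : ∀ a b : X, c' a b → G a = G b := by
      rintro a b (⟨ha, hb, hcab⟩ | ⟨ha, hb⟩)
      · rw [extHom_mem C hC g ha, extHom_mem C hC g hb]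
        have hq : ((⟨a, ha⟩ : ↥C) : c.Quotient) = (⟨b, hb⟩ : ↥C) := (c.eq).mpr hcab
        simp [hg, MulHom.comp_apply, hq]
        exact congrArg f hq
      · rw [extHom_not_mem C hC g ha, extHom_not_mem C hC g hb]
    set F : c'.Quotient →ₙ* WithZero Y :=
      { toFun := Quotient.lift G (fun a b h => hresp a b h)
        map_mul' := by
          intro p q
          induction p using Con.induction_on with
          | H a =>
            induction q using Con.induction_on with
            | H b => exact G.map_mul a b } with hF
    have hFmk : ∀ x : X, F (x : c'.Quotient) = G x := fun x => rfl
    -- range F = range G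
    have hrange : Set.range F = Set.range G := by
      ext z
      constructor
      · rintro ⟨q, rfl⟩
        induction q using Con.induction_on with
        | H a => exact ⟨a, rfl⟩
      · rintro ⟨x, rfl⟩
        exact ⟨(x : c'.Quotient), rfl⟩
    -- range g = range f
    have hrange2 : Set.range g = Set.range f := by
      ext z
      constructor
      · rintro ⟨a, rfl⟩
        exact ⟨(a : c.Quotient), rfl⟩
      · rintro ⟨q, rfl⟩
        induction q using Con.induction_on with
        | H a => exact ⟨a, rfl⟩
    -- injectivity of F
    have hFinj : Function.Injective F := by
      intro p q h
      induction p using Con.induction_on with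
      | H a =>
        induction q using Con.induction_on with
        | H b =>
          rw [hFmk, hFmk] at h
          rw [Con.eq]
          by_cases ha : a ∈ C <;> by_cases hb : b ∈ C
          · rw [extHom_mem C hC g ha, extHom_mem C hC g hb] at h
            have h2 : g ⟨a, ha⟩ = g ⟨b, hb⟩ := WithZero.coe_inj.mp h
            have h3 : ((⟨a, ha⟩ : ↥C) : c.Quotient) = ((⟨b, hb⟩ : ↥C) : c.Quotient) :=
              hinj h2
            exact Or.inl ⟨ha, hb, (c.eq).mp h3⟩
          · rw [extHom_mem C hC g ha, extHom_not_mem C hC g hb] at h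
            exact absurd h WithZero.coe_ne_zero
          · rw [extHom_not_mem C hC g ha, extHom_mem C hC g hb] at h
            exact absurd h.symm WithZero.coe_ne_zero
          · exact Or.inr ⟨ha, hb⟩
    -- discreteness of range F
    haveI hFdisc : DiscreteTopology ↥(Set.range F) := by
      apply discrete_of_isolated
      intro z hz
      rw [hrange] at hz
      obtain ⟨x, rfl⟩ := hz
      by_cases hx : x ∈ C
      · rw [extHom_mem C hC g hx]
        have hgf : g ⟨x, hx⟩ ∈ Set.range f := by rw [← hrange2]; exact ⟨⟨x, hx⟩, rfl⟩
        obtain ⟨U, hU, hmemU, hUsub⟩ := isolated_of_discrete (s := Set.range f) hgf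
        refine ⟨(fun y : Y => (y : WithZero Y)) '' U, wz_isOpen_image hU, ?_⟩
        apply Set.Subset.antisymm
        · rintro w ⟨⟨v, hv, rfl⟩, hw2⟩
          rw [hrange] at hw2
          obtain ⟨x', hx'⟩ := hw2
          by_cases hx'C : x' ∈ C
          · rw [extHom_mem C hC g hx'C] at hx'
            have hveq : g ⟨x', hx'C⟩ = v := WithZero.coe_inj.mp hx'
            have : v ∈ Set.range f := by rw [← hrange2, ← hveq]; exact ⟨⟨x', hx'C⟩, rfl⟩
            have := hUsub ⟨hv, this⟩
            simp only [Set.mem_singleton_iff] at this ⊢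
            rw [this]
          · rw [extHom_not_mem C hC g hx'C] at hx'
            exact absurd hx'.symm WithZero.coe_ne_zero
        · rintro w hw
          simp only [Set.mem_singleton_iff] at hw
          subst hw
          refine ⟨⟨g ⟨x, hx⟩, hmemU, rfl⟩, ?_⟩
          rw [hrange]
          exact ⟨x, extHom_mem C hC g hx⟩
      · rw [extHom_not_mem C hC g hx]
        refine ⟨{0}, wz_isOpen_zero, ?_⟩
        apply Set.Subset.antisymm
        · rintro w ⟨hw1, -⟩
          exact hw1
        · rintro w hw
          simp only [Set.mem_singleton_iff] at hw
          subst hw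
          refine ⟨rfl, ?_⟩
          rw [hrange]
          exact ⟨x, extHom_not_mem C hC g hx⟩
    have hclosed : IsClosed (Set.range F) :=
      hX c' (WithZero Y) (wz_hasClopenBasis hB) F hFinj hFdisc
    have hpre : Set.range f = (fun z : Y => (z : WithZero Y)) ⁻¹' Set.range F := by
      rw [hrange, ← hrange2]
      exact range_eq_preimage_range_extHom C hC g
    rw [hpre]
    exact hclosed.preimage wz_continuous_coe
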